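/- Let M₀, M₁, …, M_d be SDDM matrices with M_i = D_i − A_i, where each D_i is a positive diagonal matrix and each A_i is a nonnegative symmetric matrix, and let ε₀, …, ε_d ≥ 0 satisfy: (1) D_i − A_i ≈_{ε_{i−1}} D_{i−1} − A_{i−1} D_{i−1}⁻¹ A_{i−1} for i = 1, …, d; (2) D_i ≈_{ε_{i−1}} D_{i−1} for i = 1, …, d; and (3) D_d ≈_{ε_d} D_d − A_d. Define Z_d = D_d⁻¹ and, for i = d−1 down to 0, Z_i = (1/2)·[D_i⁻¹ + (I + D_i⁻¹A_i) Z_{i+1} (I + A_i D_i⁻¹)]. Then Z₀ ≈_{Σ_{i=0}^{d} ε_i} M₀⁻¹. -/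

import Mathlib

set_option linter.unusedSectionVars false


open Matrix

/-- Loewner order: `X ⪯ Y` iff `Y - X` is positive semidefinite. -/
def LoewnerLE {k : Type*} [Fintype k] (X Y : Matrix k k ℝ) : Prop := (Y - X).PosSemidef

/-- `X ≈_α Y` iff `e^{-α} X ⪯ Y ⪯ e^{α} X` in the Loewner order. -/
def MApprox {k : Type*} [Fintype k] (α : ℝ) (X Y : Matrix k k ℝ) : Prop :=
  LoewnerLE (Real.exp (-α) • X) Y ∧ LoewnerLE Y (Real.exp α • X)

/-- An `n × n` real symmetric matrix is SDDM if it is positive definite, has nonpositive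
off-diagonal entries, and is diagonally dominant: `M i i ≥ ∑_{j ≠ i} |M i j|`. -/
def IsSDDM {n : ℕ} (M : Matrix (Fin n) (Fin n) ℝ) : Prop :=
  M.PosDef ∧ (∀ i j, i ≠ j → M i j ≤ 0) ∧
    ∀ i, ∑ j ∈ Finset.univ.erase i, |M i j| ≤ M i i

section Aux

variable {m : Type*} [Fintype m] [DecidableEq m]

lemma psd_smul {c : ℝ} (hc : 0 ≤ c) {X : Matrix m m ℝ} (hX : X.PosSemidef) :
    (c • X).PosSemidef := by
  refine .of_dotProduct_mulVec_nonneg ?_ fun x => ?_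
  · unfold Matrix.IsHermitian
    rw [conjTranspose_smul, hX.1.eq]
    simp
  · rw [smul_mulVec, dotProduct_smul, smul_eq_mul]
    exact mul_nonneg hc (hX.dotProduct_mulVec_nonneg x)

lemma pd_smul {c : ℝ} (hc : 0 < c) {X : Matrix m m ℝ} (hX : X.PosDef) :
    (c • X).PosDef := by
  refine .of_dotProduct_mulVec_pos (psd_smul hc.le hX.posSemidef).1 fun x hx => ?_
  rw [smul_mulVec, dotProduct_smul, smul_eq_mul]
  exact mul_pos hc (hX.dotProduct_mulVec_pos hx)

lemma smul_inv_mat {c : ℝ} (hc : c ≠ 0) {X : Matrix m m ℝ} (hX : IsUnit X.det) :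
    (c • X)⁻¹ = c⁻¹ • X⁻¹ := by
  apply Matrix.inv_eq_right_inv
  rw [smul_mul_smul_comm, mul_inv_cancel₀ hc, Matrix.mul_nonsing_inv _ hX, one_smul]

/-- variational inequality: `2⟨u,x⟩ - ⟨u,Xu⟩ ≤ ⟨x,X⁻¹x⟩` for `X` positive definite. -/
lemma quad_ineq {X : Matrix m m ℝ} (hX : X.PosDef) (u x : m → ℝ) :
    2 * (u ⬝ᵥ x) - u ⬝ᵥ (X *ᵥ u) ≤ x ⬝ᵥ (X⁻¹ *ᵥ x) := by
  have hXu : IsUnit X.det := hX.det_pos.ne'.isUnit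
  set a := X⁻¹ *ᵥ x with ha
  have hXa : X *ᵥ a = x := by
    rw [ha, mulVec_mulVec, Matrix.mul_nonsing_inv _ hXu, one_mulVec]
  set w := a - u with hw
  have h0 : 0 ≤ w ⬝ᵥ (X *ᵥ w) := by
    have := hX.posSemidef.dotProduct_mulVec_nonneg w
    simpa using this
  have hexp : w ⬝ᵥ (X *ᵥ w) = x ⬝ᵥ a - 2 * (u ⬝ᵥ x) + u ⬝ᵥ (X *ᵥ u) := by
    have haXu : a ⬝ᵥ (X *ᵥ u) = x ⬝ᵥ u := by
      rw [dotProduct_mulVec, ← mulVec_transpose, ← Matrix.conjTranspose_eq_transpose_of_trivial,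
        hX.isHermitian.eq, hXa]
    rw [hw, mulVec_sub, sub_dotProduct, dotProduct_sub, dotProduct_sub, hXa, haXu]
    rw [dotProduct_comm a x, dotProduct_comm u x]
    ring
  nlinarith [h0, hexp]

lemma inv_antitone {X Y : Matrix m m ℝ} (hX : X.PosDef) (hY : Y.PosDef)
    (h : (Y - X).PosSemidef) : (X⁻¹ - Y⁻¹).PosSemidef := by
  have hYu : IsUnit Y.det := hY.det_pos.ne'.isUnit
  refine .of_dotProduct_mulVec_nonneg (hX.isHermitian.inv.sub hY.isHermitian.inv) fun x => ?_
  have hx : (star x : m → ℝ) = x := by simp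
  rw [hx, sub_mulVec, dotProduct_sub]
  set u := Y⁻¹ *ᵥ x with hu
  have hYux : Y *ᵥ u = x := by
    rw [hu, mulVec_mulVec, Matrix.mul_nonsing_inv _ hYu, one_mulVec]
  have h1 : x ⬝ᵥ (Y⁻¹ *ᵥ x) = 2 * (u ⬝ᵥ x) - u ⬝ᵥ (Y *ᵥ u) := by
    rw [hYux, dotProduct_comm x u]; ring
  have h2 : u ⬝ᵥ (X *ᵥ u) ≤ u ⬝ᵥ (Y *ᵥ u) := by
    have := h.dotProduct_mulVec_nonneg u
    simp only [star_trivial, sub_mulVec, dotProduct_sub] at this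
    linarith
  have h3 := quad_ineq hX u x
  linarith

lemma lle_smul {c : ℝ} (hc : 0 ≤ c) {X Y : Matrix m m ℝ} (h : LoewnerLE X Y) :
    LoewnerLE (c • X) (c • Y) := by
  unfold LoewnerLE at *
  rw [← smul_sub]
  exact psd_smul hc h

lemma mapprox_symm {α : ℝ} {X Y : Matrix m m ℝ} (h : MApprox α X Y) : MApprox α Y X := by
  obtain ⟨h1, h2⟩ := h
  have h1' : (Y - Real.exp (-α) • X).PosSemidef := h1
  have h2' : (Real.exp α • X - Y).PosSemidef := h2
  constructor
  · show (X - Real.exp (-α) • Y).PosSemidef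
    have := psd_smul (Real.exp_nonneg (-α)) h2'
    rwa [smul_sub, smul_smul, ← Real.exp_add, neg_add_cancel, Real.exp_zero, one_smul] at this
  · show (Real.exp α • Y - X).PosSemidef
    have := psd_smul (Real.exp_nonneg α) h1'
    rwa [smul_sub, smul_smul, ← Real.exp_add, add_neg_cancel, Real.exp_zero, one_smul] at this

lemma mapprox_trans {α β : ℝ} {X Y W : Matrix m m ℝ}
    (h1 : MApprox α X Y) (h2 : MApprox β Y W) : MApprox (α + β) X W := by
  have h1a : (Y - Real.exp (-α) • X).PosSemidef := h1.1
  have h1b : (Real.exp α • X - Y).PosSemidef := h1.2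
  have h2a : (W - Real.exp (-β) • Y).PosSemidef := h2.1
  have h2b : (Real.exp β • Y - W).PosSemidef := h2.2
  constructor
  · show (W - Real.exp (-(α + β)) • X).PosSemidef
    have := h2a.add (psd_smul (Real.exp_nonneg (-β)) h1a)
    rwa [show W - Real.exp (-β) • Y + Real.exp (-β) • (Y - Real.exp (-α) • X)
        = W - Real.exp (-(α + β)) • X by
      rw [smul_sub, smul_smul, ← Real.exp_add, show -β + -α = -(α + β) by ring]; abel] at this
  · show (Real.exp (α + β) • X - W).PosSemidef
    have := h2b.add (psd_smul (Real.exp_nonneg β) h1b)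
    rwa [show Real.exp β • Y - W + Real.exp β • (Real.exp α • X - Y)
        = Real.exp (α + β) • X - W by
      rw [smul_sub, smul_smul, ← Real.exp_add, show β + α = α + β by ring]; abel] at this

lemma mapprox_posdef {α : ℝ} {X Y : Matrix m m ℝ} (hX : X.PosDef) (h : MApprox α X Y) :
    Y.PosDef := by
  have h1 : (Y - Real.exp (-α) • X).PosSemidef := h.1
  have := Matrix.PosDef.posSemidef_add h1 (pd_smul (Real.exp_pos (-α)) hX)
  rwa [sub_add_cancel] at this

lemma mapprox_inv {α : ℝ} {X Y : Matrix m m ℝ} (hX : X.PosDef) (hY : Y.PosDef)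
    (h : MApprox α X Y) : MApprox α X⁻¹ Y⁻¹ := by
  have hXd : IsUnit X.det := hX.det_pos.ne'.isUnit
  constructor
  · show (Y⁻¹ - Real.exp (-α) • X⁻¹).PosSemidef
    have h2' : (Real.exp α • X - Y).PosSemidef := h.2
    have := inv_antitone hY (pd_smul (Real.exp_pos α) hX) h2'
    rwa [smul_inv_mat (Real.exp_pos α).ne' hXd, ← Real.exp_neg] at this
  · show (Real.exp α • X⁻¹ - Y⁻¹).PosSemidef
    have h1' : (Y - Real.exp (-α) • X).PosSemidef := h.1
    have := inv_antitone (pd_smul (Real.exp_pos (-α)) hX) hY h1'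
    rwa [smul_inv_mat (Real.exp_pos (-α)).ne' hXd, ← Real.exp_neg, neg_neg] at this

lemma mapprox_conj {α : ℝ} {X Y : Matrix m m ℝ} (C : Matrix m m ℝ)
    (h : MApprox α X Y) : MApprox α (C * X * Cᵀ) (C * Y * Cᵀ) := by
  have key : ∀ P Q : Matrix m m ℝ, (Q - P).PosSemidef →
      (C * Q * Cᵀ - C * P * Cᵀ).PosSemidef := by
    intro P Q hPQ
    have := hPQ.mul_mul_conjTranspose_same C
    rwa [Matrix.conjTranspose_eq_transpose_of_trivial, Matrix.mul_sub, Matrix.sub_mul] at this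
  constructor
  · show (C * Y * Cᵀ - Real.exp (-α) • (C * X * Cᵀ)).PosSemidef
    have h1' : (Y - Real.exp (-α) • X).PosSemidef := h.1
    have := key _ _ h1'
    rwa [Matrix.mul_smul, Matrix.smul_mul] at this
  · show (Real.exp α • (C * X * Cᵀ) - C * Y * Cᵀ).PosSemidef
    have h2' : (Real.exp α • X - Y).PosSemidef := h.2
    have := key _ _ h2'
    rwa [Matrix.mul_smul, Matrix.smul_mul] at this

lemma mapprox_add_psd {α : ℝ} {X Y P : Matrix m m ℝ} (hα : 0 ≤ α)
    (hP : P.PosSemidef) (h : MApprox α X Y) : MApprox α (P + X) (P + Y) := by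
  have hle1 : Real.exp (-α) ≤ 1 := by
    have : Real.exp (-α) ≤ Real.exp 0 := Real.exp_le_exp.mpr (by linarith)
    simpa using this
  have hge1 : 1 ≤ Real.exp α := by
    have : Real.exp 0 ≤ Real.exp α := Real.exp_le_exp.mpr hα
    simpa using this
  have h1' : (Y - Real.exp (-α) • X).PosSemidef := h.1
  have h2' : (Real.exp α • X - Y).PosSemidef := h.2
  constructor
  · show ((P + Y) - Real.exp (-α) • (P + X)).PosSemidef
    have := (psd_smul (by linarith : (0:ℝ) ≤ 1 - Real.exp (-α)) hP).add h1'
    rwa [show (1 - Real.exp (-α)) • P + (Y - Real.exp (-α) • X)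
        = (P + Y) - Real.exp (-α) • (P + X) by rw [smul_add, sub_smul, one_smul]; abel] at this
  · show (Real.exp α • (P + X) - (P + Y)).PosSemidef
    have := (psd_smul (by linarith : (0:ℝ) ≤ Real.exp α - 1) hP).add h2'
    rwa [show (Real.exp α - 1) • P + (Real.exp α • X - Y)
        = Real.exp α • (P + X) - (P + Y) by rw [smul_add, sub_smul, one_smul]; abel] at this

lemma mapprox_smul {α c : ℝ} {X Y : Matrix m m ℝ} (hc : 0 ≤ c)
    (h : MApprox α X Y) : MApprox α (c • X) (c • Y) := by
  have h1' : (Y - Real.exp (-α) • X).PosSemidef := h.1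
  have h2' : (Real.exp α • X - Y).PosSemidef := h.2
  constructor
  · show (c • Y - Real.exp (-α) • (c • X)).PosSemidef
    have := psd_smul hc h1'
    rwa [smul_sub, smul_comm] at this
  · show (Real.exp α • (c • X) - c • Y).PosSemidef
    have := psd_smul hc h2'
    rwa [smul_sub, smul_comm] at this

lemma key_identity {D A : Matrix m m ℝ} (hDu : IsUnit D.det)
    (hNu : IsUnit (D - A * D⁻¹ * A).det) :
    (D - A)⁻¹ = (1 / 2 : ℝ) • (D⁻¹ + (1 + D⁻¹ * A) * (D - A * D⁻¹ * A)⁻¹ * (1 + A * D⁻¹)) := by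
  set N := D - A * D⁻¹ * A with hN
  have hD1 : D * D⁻¹ = 1 := Matrix.mul_nonsing_inv _ hDu
  have hN1 : N * N⁻¹ = 1 := Matrix.mul_nonsing_inv _ hNu
  apply Matrix.inv_eq_right_inv
  have e1 : (D - A) * D⁻¹ = 1 - A * D⁻¹ := by rw [Matrix.sub_mul, hD1]
  have e2 : (D - A) * (1 + D⁻¹ * A) = N := by
    rw [Matrix.mul_add, mul_one, Matrix.sub_mul, ← Matrix.mul_assoc, hD1, one_mul, hN,
      ← Matrix.mul_assoc]
    abel
  calc (D - A) * ((1 / 2 : ℝ) • (D⁻¹ + (1 + D⁻¹ * A) * N⁻¹ * (1 + A * D⁻¹)))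
      = (1 / 2 : ℝ) • ((D - A) * D⁻¹
          + ((D - A) * (1 + D⁻¹ * A)) * (N⁻¹ * (1 + A * D⁻¹))) := by
        rw [mul_smul_comm, Matrix.mul_add]
        simp only [Matrix.mul_assoc]
    _ = (1 / 2 : ℝ) • ((1 - A * D⁻¹) + (1 + A * D⁻¹)) := by
        rw [e1, e2, ← Matrix.mul_assoc, hN1, one_mul]
    _ = 1 := by
        rw [show (1 - A * D⁻¹) + (1 + A * D⁻¹) = (1 : Matrix m m ℝ) + 1 by abel, smul_add,
          ← add_smul]
        norm_num

end Aux

/-- Given an inverse approximated chain `{(D_i, A_i)}_{i=0}^d` of SDDM matrices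
`M_i = D_i − A_i` and the solver operator `Z_i` defined backwards by
`Z_d = D_d⁻¹` and `Z_i = (1/2)[D_i⁻¹ + (I + D_i⁻¹A_i) Z_{i+1} (I + A_i D_i⁻¹)]`,
we have `Z₀ ≈_{Σ_{i=0}^d ε_i} M₀⁻¹`. -/
theorem solver_operator_approx_inverse {n : ℕ} (d : ℕ)
    (D A : ℕ → Matrix (Fin n) (Fin n) ℝ) (ε : ℕ → ℝ)
    (hD : ∀ i ≤ d, ∃ dv : Fin n → ℝ, (∀ k, 0 < dv k) ∧ D i = Matrix.diagonal dv)
    (hAsymm : ∀ i ≤ d, (A i).IsSymm)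
    (hAnn : ∀ i ≤ d, ∀ k l, 0 ≤ A i k l)
    (hSDDM : ∀ i ≤ d, IsSDDM (D i - A i))
    (hε : ∀ i ≤ d, 0 ≤ ε i)
    (h1 : ∀ i, 1 ≤ i → i ≤ d →
      MApprox (ε (i - 1)) (D i - A i) (D (i - 1) - A (i - 1) * (D (i - 1))⁻¹ * A (i - 1)))
    (h2 : ∀ i, 1 ≤ i → i ≤ d → MApprox (ε (i - 1)) (D i) (D (i - 1)))
    (h3 : MApprox (ε d) (D d) (D d - A d))
    (Z : ℕ → Matrix (Fin n) (Fin n) ℝ)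
    (hZd : Z d = (D d)⁻¹)
    (hZ : ∀ i < d, Z i =
      (1 / 2 : ℝ) • ((D i)⁻¹ + (1 + (D i)⁻¹ * A i) * Z (i + 1) * (1 + A i * (D i)⁻¹))) :
    MApprox (∑ i ∈ Finset.range (d + 1), ε i) (Z 0) ((D 0 - A 0)⁻¹) := by
  have hDpd : ∀ i ≤ d, (D i).PosDef := by
    intro i hi
    obtain ⟨dv, hdv, hEq⟩ := hD i hi
    rw [hEq]
    exact Matrix.PosDef.diagonal hdv
  have hDsymm : ∀ i ≤ d, (D i)ᵀ = D i := by
    intro i hi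
    obtain ⟨dv, hdv, hEq⟩ := hD i hi
    rw [hEq, Matrix.diagonal_transpose]
  have key : ∀ k, k ≤ d →
      MApprox (∑ j ∈ Finset.Icc (d - k) d, ε j) (Z (d - k)) ((D (d - k) - A (d - k))⁻¹) := by
    intro k
    induction k with
    | zero =>
      intro _
      simp only [Nat.sub_zero, Finset.Icc_self, Finset.sum_singleton]
      rw [hZd]
      exact mapprox_inv (hDpd d le_rfl) (hSDDM d le_rfl).1 h3
    | succ k ih =>
      intro hk
      have hk' : k ≤ d := Nat.le_of_succ_le hk
      set i := d - (k + 1) with hi_def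
      have hi : i < d := by omega
      have hdk : d - k = i + 1 := by omega
      have ih' := ih hk'
      rw [hdk] at ih'
      -- abbreviations
      have hile : i ≤ d := hi.le
      have hi1le : i + 1 ≤ d := by omega
      have hMpd : (D (i + 1) - A (i + 1)).PosDef := (hSDDM (i + 1) hi1le).1
      have h1' := h1 (i + 1) (by omega) hi1le
      rw [Nat.add_sub_cancel] at h1'
      have hNpd : (D i - A i * (D i)⁻¹ * A i).PosDef := mapprox_posdef hMpd h1'
      have hinv := mapprox_inv hMpd hNpd h1'
      have htrans := mapprox_trans ih' hinv
      have hconj := mapprox_conj (1 + (D i)⁻¹ * A i) htrans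
      have hCt : (1 + (D i)⁻¹ * A i)ᵀ = 1 + A i * (D i)⁻¹ := by
        rw [Matrix.transpose_add, Matrix.transpose_one, Matrix.transpose_mul,
          Matrix.transpose_nonsing_inv, hDsymm i hile, (hAsymm i hile).eq]
      rw [hCt] at hconj
      have hS : 0 ≤ ∑ j ∈ Finset.Icc (i + 1) d, ε j :=
        Finset.sum_nonneg fun j hj => hε j (Finset.mem_Icc.mp hj).2
      have hadd := mapprox_add_psd (by have := hε i hile; linarith)
        (hDpd i hile).inv.posSemidef hconj
      have hsmul := mapprox_smul (by norm_num : (0:ℝ) ≤ 1 / 2) hadd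
      rw [← hZ i hi, ← key_identity (hDpd i hile).det_pos.ne'.isUnit
        hNpd.det_pos.ne'.isUnit] at hsmul
      have hsum : ∑ j ∈ Finset.Icc i d, ε j
          = (∑ j ∈ Finset.Icc (i + 1) d, ε j) + ε i := by
        have hins : Finset.Icc i d = insert i (Finset.Icc (i + 1) d) := by
          ext x
          simp only [Finset.mem_Icc, Finset.mem_insert]
          omega
        rw [hins, Finset.sum_insert (by simp), add_comm]
      rw [hsum]
      exact hsmul
  have h0 := key d le_rfl
  rw [Nat.sub_self] at h0
  rwa [show Finset.range (d + 1) = Finset.Icc 0 d by ext x; simp]
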